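/- With the stated normalization of the orthonormal rational functions, for all n ≥ 0 one has φ_n^α = (φ_n^β)_* and (φ_n^α)^*·B̌_n^β = φ_n^β·B̌_n^α, and hence also (φ_n^β)^*·B̌_n^α = φ_n^α·B̌_n^β. -/

import Mathlib

noncomputable section
open MeasureTheory
open scoped Classical

namespace ORF

/-- complex conjugation -/
def conj' (z : ℂ) : ℂ := (starRingEnd ℂ) z

/-- membership in the unit circle 𝕋 -/
def onT (z : ℂ) : Prop := ‖z‖ = 1

/-- `z` is a (strictly) positive real number -/
def posR (z : ℂ) : Prop := 0 < z.re ∧ z.im = 0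

/-- σ_j = conj(α_j)/|α_j| (σ_j = 1 if α_j = 0, i.e. if β_j = ∞) -/
def sig (α : ℕ → ℂ) (j : ℕ) : ℂ :=
  if α j = 0 then 1 else conj' (α j) / ((‖α j‖ : ℝ) : ℂ)

/-- ς_n = ∏_{j=1}^n σ_j -/
def sigProd (α : ℕ → ℂ) (n : ℕ) : ℂ := ∏ j ∈ Finset.Icc 1 n, sig α j

/-- ϖ_j^α(z) = 1 − conj(α_j)·z, as a polynomial in z -/
def wA (α : ℕ → ℂ) (j : ℕ) : Polynomial ℂ :=
  1 - Polynomial.C (conj' (α j)) * Polynomial.X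

/-- ϖ_j^β(z) = 1 − conj(β_j)·z = 1 − z/α_j, and −z when β_j = ∞ (α_j = 0) -/
def wB (α : ℕ → ℂ) (j : ℕ) : Polynomial ℂ :=
  if α j = 0 then -Polynomial.X else 1 - Polynomial.C (α j)⁻¹ * Polynomial.X

/-- ϖ_j = ϖ_j^γ (γ_j = α_j when `c j`, γ_j = β_j otherwise) -/
def wG (α : ℕ → ℂ) (c : ℕ → Bool) (j : ℕ) : Polynomial ℂ :=
  if c j then wA α j else wB α j

/-- π_n^α -/
def piA (α : ℕ → ℂ) (n : ℕ) : Polynomial ℂ := ∏ j ∈ Finset.Icc 1 n, wA α j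
/-- π_n^β -/
def piB (α : ℕ → ℂ) (n : ℕ) : Polynomial ℂ := ∏ j ∈ Finset.Icc 1 n, wB α j
/-- π_n = π_n^γ -/
def piG (α : ℕ → ℂ) (c : ℕ → Bool) (n : ℕ) : Polynomial ℂ := ∏ j ∈ Finset.Icc 1 n, wG α c j

/-- 𝕒_n = {1 ≤ j ≤ n : γ_j = α_j} -/
def aSet (c : ℕ → Bool) (n : ℕ) : Finset ℕ := (Finset.Icc 1 n).filter (fun j => c j = true)
/-- 𝕓_n = {1 ≤ j ≤ n : γ_j = β_j} -/
def bSet (c : ℕ → Bool) (n : ℕ) : Finset ℕ := (Finset.Icc 1 n).filter (fun j => c j = false)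

/-- Blaschke factor ζ_j^α -/
def zetaA (α : ℕ → ℂ) (j : ℕ) (z : ℂ) : ℂ :=
  if α j = 0 then z else sig α j * (z - α j) / (1 - conj' (α j) * z)

/-- Blaschke factor ζ_j^β (β_j = 1/conj(α_j); ζ_j^β(z) = 1/z when β_j = ∞) -/
def zetaB (α : ℕ → ℂ) (j : ℕ) (z : ℂ) : ℂ :=
  if α j = 0 then z⁻¹ else sig α j * (z - (conj' (α j))⁻¹) / (1 - z / α j)

/-- ζ_j = ζ_j^γ -/
def zetaG (α : ℕ → ℂ) (c : ℕ → Bool) (j : ℕ) (z : ℂ) : ℂ :=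
  if c j then zetaA α j z else zetaB α j z

/-- B_n^α -/
def BA (α : ℕ → ℂ) (n : ℕ) (z : ℂ) : ℂ := ∏ j ∈ Finset.Icc 1 n, zetaA α j z
/-- B_n^β -/
def BB (α : ℕ → ℂ) (n : ℕ) (z : ℂ) : ℂ := ∏ j ∈ Finset.Icc 1 n, zetaB α j z
/-- B̌_n^α = ∏_{j ∈ 𝕒_n} ζ_j -/
def BcA (α : ℕ → ℂ) (c : ℕ → Bool) (n : ℕ) (z : ℂ) : ℂ := ∏ j ∈ aSet c n, zetaG α c j z
/-- B̌_n^β = ∏_{j ∈ 𝕓_n} ζ_j -/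
def BcB (α : ℕ → ℂ) (c : ℕ → Bool) (n : ℕ) (z : ℂ) : ℂ := ∏ j ∈ bSet c n, zetaG α c j z

/-- ζ̌_n^α (= ζ_n if γ_n = α_n, = 1 otherwise) -/
def zcA (α : ℕ → ℂ) (c : ℕ → Bool) (n : ℕ) (z : ℂ) : ℂ :=
  if c n then zetaG α c n z else 1
/-- ζ̌_n^β (= ζ_n if γ_n = β_n, = 1 otherwise) -/
def zcB (α : ℕ → ℂ) (c : ℕ → Bool) (n : ℕ) (z : ℂ) : ℂ :=
  if c n then 1 else zetaG α c n z

/-- The space L_n^ν = {p/π_n^ν : deg p ≤ n}; a function `f` belongs to it if it agrees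
with such a rational function on the unit circle (where all these objects live). -/
def Lsp (pip : ℕ → Polynomial ℂ) (n : ℕ) : Set (ℂ → ℂ) :=
  {f | ∃ p : Polynomial ℂ, p.natDegree ≤ n ∧ ∀ z, onT z → f z = p.eval z / (pip n).eval z}

/-- L_{n*}^ν = {f_* : f ∈ L_n^ν} (again as functions on the unit circle, where
f_*(z) = conj(f(1/conj z)) = conj(f(z))) -/
def LstarSp (pip : ℕ → Polynomial ℂ) (n : ℕ) : Set (ℂ → ℂ) :=
  {f | ∃ p : Polynomial ℂ, p.natDegree ≤ n ∧ ∀ z, onT z → f z = conj' (p.eval z / (pip n).eval z)}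

/-- R_n^ν = L_n^ν · L_{n*}^ν -/
def Rset (pip : ℕ → Polynomial ℂ) (n : ℕ) : Set (ℂ → ℂ) :=
  {h | ∃ g ∈ Lsp pip n, ∃ k ∈ LstarSp pip n, ∀ z, onT z → h z = g z * k z}

/-- the substar conjugate f_*(z) = conj(f(1/conj z)) -/
def substar (f : ℂ → ℂ) : ℂ → ℂ := fun z => conj' (f ((conj' z)⁻¹))

/-- superstar conjugate q^*(z) = z^n conj(q(1/conj z)) of a polynomial of degree ≤ n -/
def pstar (n : ℕ) (q : Polynomial ℂ) : Polynomial ℂ :=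
  ∑ k ∈ Finset.range (n + 1), Polynomial.C (conj' (q.coeff k)) * Polynomial.X ^ (n - k)

/-- the inner product ⟨f,g⟩ = ∫ conj(f) g dμ -/
def inn (μ : Measure ℂ) (f g : ℂ → ℂ) : ℂ := ∫ z, conj' (f z) * g z ∂μ

/-- the reciprocal ORF φ_n^{ν*} = B_n^ν (φ_n^ν)_* (resp. φ_n^* = B̌_n^α B̌_n^β (φ_n)_*),
written out as the rational function ς_n p_n^{ν*}/π_n^ν -/
def starF (α : ℕ → ℂ) (pip : ℕ → Polynomial ℂ) (p : ℕ → Polynomial ℂ) (n : ℕ) (z : ℂ) : ℂ :=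
  sigProd α n * (pstar n (p n)).eval z / (pip n).eval z

/-- `μ` is a probability measure on the unit circle 𝕋, positive a.e. on 𝕋 -/
structure CircleMeasure (μ : Measure ℂ) : Prop where
  prob : IsProbabilityMeasure μ
  circ : μ {z | ¬ onT z} = 0
  pos : ∀ U : Set ℂ, IsOpen U → (U ∩ {z | onT z}).Nonempty → 0 < μ U

/-- `φ` (with numerators `p`) is the sequence of orthonormal rational functions for the
nested spaces `Lsp pip`: φ_0 = 1, φ_n = p_n/π_n ∈ L_n \ L_{n-1}, φ_n ⊥ L_{n-1}, ‖φ_n‖ = 1. -/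
structure IsORF (μ : Measure ℂ) (pip : ℕ → Polynomial ℂ) (φ : ℕ → ℂ → ℂ)
    (p : ℕ → Polynomial ℂ) : Prop where
  rep : ∀ n z, φ n z = (p n).eval z / (pip n).eval z
  deg : ∀ n, (p n).natDegree ≤ n
  p0 : p 0 = 1
  notmem : ∀ n, 1 ≤ n → φ n ∉ Lsp pip (n - 1)
  orth : ∀ n, 1 ≤ n → ∀ f ∈ Lsp pip (n - 1), inn μ (φ n) f = 0
  norm : ∀ n, inn μ (φ n) (φ n) = 1

/-- normalization φ_n^{α*}(α_n) > 0 -/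
def normA (α : ℕ → ℂ) (p : ℕ → Polynomial ℂ) (n : ℕ) : Prop :=
  posR (sigProd α n * (pstar n (p n)).eval (α n) / (piA α n).eval (α n))

/-- normalization φ_n^{β*}(β_n) > 0 (when β_n = ∞ the value is the limit,
i.e. the ratio of the coefficients of z^n) -/
def normB (α : ℕ → ℂ) (p : ℕ → Polynomial ℂ) (n : ℕ) : Prop :=
  if α n = 0 then posR (sigProd α n * (pstar n (p n)).coeff n / (piB α n).coeff n)
  else posR (sigProd α n * (pstar n (p n)).eval ((conj' (α n))⁻¹) /
    (piB α n).eval ((conj' (α n))⁻¹))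

/-- π̌_n^α = ∏_{j∈𝕒_n} ϖ_j -/
def pidA (α : ℕ → ℂ) (c : ℕ → Bool) (n : ℕ) : Polynomial ℂ := ∏ j ∈ aSet c n, wA α j
/-- π̌_n^β = ∏_{j∈𝕓_n} ϖ_j -/
def pidB (α : ℕ → ℂ) (c : ℕ → Bool) (n : ℕ) : Polynomial ℂ := ∏ j ∈ bSet c n, wB α j
/-- ∏_{j∈𝕓_n}(z − β_j), a factor being −1 when β_j = ∞ -/
def dB (α : ℕ → ℂ) (c : ℕ → Bool) (n : ℕ) : Polynomial ℂ :=
  ∏ j ∈ bSet c n,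
    (if α j = 0 then (-1 : Polynomial ℂ) else Polynomial.X - Polynomial.C ((conj' (α j))⁻¹))
/-- ∏_{j∈𝕒_n}(z − α_j) -/
def dA (α : ℕ → ℂ) (c : ℕ → Bool) (n : ℕ) : Polynomial ℂ :=
  ∏ j ∈ aSet c n, (Polynomial.X - Polynomial.C (α j))

/-- ς̌_n^α = ∏_{j∈𝕒_n} σ_j -/
def sigcA (α : ℕ → ℂ) (c : ℕ → Bool) (n : ℕ) : ℂ := ∏ j ∈ aSet c n, sig α j
/-- ς̌_n^β = ∏_{j∈𝕓_n} σ_j -/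
def sigcB (α : ℕ → ℂ) (c : ℕ → Bool) (n : ℕ) : ℂ := ∏ j ∈ bSet c n, sig α j

/-- normalization for the γ-sequence: (φ_n^*/B̌_n^β)(α_n) > 0 when γ_n = α_n and
(φ_n^*/B̌_n^α)(β_n) > 0 when γ_n = β_n, written via the identities
φ_n^*/B̌_n^β = ς̌_n^α p_n^*/(π̌_n^α ∏_{j∈𝕓_n}(z−β_j)) and
φ_n^*/B̌_n^α = ς̌_n^β p_n^*/(π̌_n^β ∏_{j∈𝕒_n}(z−α_j)) (the value at β_n = ∞ being the
limit, i.e. the ratio of the coefficients of z^n). -/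
def normG (α : ℕ → ℂ) (c : ℕ → Bool) (p : ℕ → Polynomial ℂ) (n : ℕ) : Prop :=
  if c n then
    posR (sigcA α c n * (pstar n (p n)).eval (α n) /
      ((pidA α c n).eval (α n) * (dB α c n).eval (α n)))
  else if α n = 0 then
    posR (sigcB α c n * (pstar n (p n)).coeff n / ((pidB α c n) * dA α c n).coeff n)
  else
    posR (sigcB α c n * (pstar n (p n)).eval ((conj' (α n))⁻¹) /
      ((pidB α c n) * dA α c n).eval ((conj' (α n))⁻¹))

/-- the reproducing kernel k_n(z,w) = Σ_{k=0}^n φ_k(z) conj(φ_k(w)) -/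
def ker (φ : ℕ → ℂ → ℂ) (n : ℕ) (z w : ℂ) : ℂ :=
  ∑ k ∈ Finset.range (n + 1), φ k z * conj' (φ k w)

/-- evaluation of a polynomial of degree ≤ m at γ_j (its coefficient of z^m when γ_j = ∞) -/
def gEval (α : ℕ → ℂ) (c : ℕ → Bool) (m j : ℕ) (q : Polynomial ℂ) : ℂ :=
  if c j then q.eval (α j)
  else if α j = 0 then q.coeff m
  else q.eval ((conj' (α j))⁻¹)

/-- evaluation of a polynomial of degree ≤ m at β_j (its coefficient of z^m when β_j = ∞) -/
def bEval (α : ℕ → ℂ) (m j : ℕ) (q : Polynomial ℂ) : ℂ :=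
  if α j = 0 then q.coeff m else q.eval ((conj' (α j))⁻¹)

/-- η_n^α (the unimodular constant in the Szegő parameter λ_n^α) -/
def etaA (α : ℕ → ℂ) (p : ℕ → Polynomial ℂ) (n : ℕ) : ℂ :=
  conj' (sigProd α (n - 2)) * conj' ((pstar (n - 1) (p (n - 1))).eval (α (n - 1))) /
    ((pstar (n - 1) (p (n - 1))).eval (α (n - 1)))

/-- the Szegő parameter λ_n^α -/
def lamA (α : ℕ → ℂ) (p : ℕ → Polynomial ℂ) (n : ℕ) : ℂ :=
  etaA α p n * (p n).eval (α (n - 1)) / conj' ((pstar n (p n)).eval (α (n - 1)))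

/-- η_n^β -/
def etaB (α : ℕ → ℂ) (p : ℕ → Polynomial ℂ) (n : ℕ) : ℂ :=
  conj' (sigProd α (n - 2)) * conj' (bEval α (n - 1) (n - 1) (pstar (n - 1) (p (n - 1)))) /
    (bEval α (n - 1) (n - 1) (pstar (n - 1) (p (n - 1))))

/-- the Szegő parameter λ_n^β -/
def lamB (α : ℕ → ℂ) (p : ℕ → Polynomial ℂ) (n : ℕ) : ℂ :=
  etaB α p n * bEval α n (n - 1) (p n) / conj' (bEval α n (n - 1) (pstar n (p n)))

/-- η_n = η_n^γ -/
def etaG (α : ℕ → ℂ) (c : ℕ → Bool) (p : ℕ → Polynomial ℂ) (n : ℕ) : ℂ :=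
  conj' (sigProd α (n - 2)) * conj' (gEval α c (n - 1) (n - 1) (pstar (n - 1) (p (n - 1)))) /
    (gEval α c (n - 1) (n - 1) (pstar (n - 1) (p (n - 1))))

/-- the Szegő parameter λ_n = λ_n^γ -/
def lamG (α : ℕ → ℂ) (c : ℕ → Bool) (p : ℕ → Polynomial ℂ) (n : ℕ) : ℂ :=
  etaG α c p n * gEval α c n (n - 1) (p n) / conj' (gEval α c n (n - 1) (pstar n (p n)))

/-- functions of the second kind: ψ(z) = ∫ E(t,z) φ(t) − D(t,z) φ(z) dμ(t) -/
def psi (μ : Measure ℂ) (φ : ℂ → ℂ) (z : ℂ) : ℂ :=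
  ∫ t, (2 * t / (t - z)) * φ t - ((t + z) / (t - z)) * φ z ∂μ

/-- ∏_{j=k+1}^n ϖ_j -/
def tailProd (α : ℕ → ℂ) (c : ℕ → Bool) (n k : ℕ) : Polynomial ℂ :=
  ∏ j ∈ Finset.Icc (k + 1) n, wG α c j

/-- the numerator C_n(z,w) of the kernel k_n = C_n/(π_n(z) conj(π_n(w))), as a polynomial
in w after conjugation: C_n(z,w) = conj((CnPoly n z).eval w) -/
def CnPoly (α : ℕ → ℂ) (c : ℕ → Bool) (p : ℕ → Polynomial ℂ) (n : ℕ) (z : ℂ) : Polynomial ℂ :=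
  ∑ k ∈ Finset.range (n + 1),
    Polynomial.C (conj' ((p k).eval z * (tailProd α c n k).eval z)) * ((p k) * tailProd α c n k)

/-- z ↦ C_n(z,∞) (the coefficient of w^n of w ↦ C_n(z,w)), as a polynomial in z -/
def CnInf (α : ℕ → ℂ) (c : ℕ → Bool) (p : ℕ → Polynomial ℂ) (n : ℕ) : Polynomial ℂ :=
  ∑ k ∈ Finset.range (n + 1),
    ((p k) * tailProd α c n k) * Polynomial.C (conj' (((p k) * tailProd α c n k).coeff n))

/-- ϖ_n^*(z) = z − γ_n (= −1 when γ_n = ∞) -/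
def wstarG (α : ℕ → ℂ) (c : ℕ → Bool) (n : ℕ) : Polynomial ℂ :=
  if c n then Polynomial.X - Polynomial.C (α n)
  else if α n = 0 then -1
  else Polynomial.X - Polynomial.C ((conj' (α n))⁻¹)

-- ##### helpers #####

lemma conj'_mul (a b : ℂ) : conj' (a * b) = conj' a * conj' b := map_mul (starRingEnd ℂ) a b
lemma conj'_conj' (a : ℂ) : conj' (conj' a) = a := Complex.conj_conj a
lemma conj'_inv (a : ℂ) : conj' a⁻¹ = (conj' a)⁻¹ := map_inv₀ (starRingEnd ℂ) a
lemma conj'_one : conj' 1 = 1 := map_one (starRingEnd ℂ)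
lemma conj'_zero : conj' 0 = 0 := map_zero (starRingEnd ℂ)
lemma conj'_neg (a : ℂ) : conj' (-a) = -conj' a := map_neg (starRingEnd ℂ) a
lemma conj'_sub (a b : ℂ) : conj' (a - b) = conj' a - conj' b := map_sub (starRingEnd ℂ) a b
lemma conj'_add (a b : ℂ) : conj' (a + b) = conj' a + conj' b := map_add (starRingEnd ℂ) a b
lemma conj'_div (a b : ℂ) : conj' (a / b) = conj' a / conj' b := map_div₀ (starRingEnd ℂ) a b
lemma conj'_pow (a : ℂ) (k : ℕ) : conj' (a ^ k) = conj' a ^ k := map_pow (starRingEnd ℂ) a k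
lemma conj'_eq_zero {a : ℂ} : conj' a = 0 ↔ a = 0 := map_eq_zero (starRingEnd ℂ)
lemma conj'_sum {s : Finset ℕ} {f : ℕ → ℂ} : conj' (∑ i ∈ s, f i) = ∑ i ∈ s, conj' (f i) :=
  map_sum (starRingEnd ℂ) f s
lemma conj'_prod {s : Finset ℕ} {f : ℕ → ℂ} : conj' (∏ i ∈ s, f i) = ∏ i ∈ s, conj' (f i) :=
  map_prod (starRingEnd ℂ) f s
lemma conj'_abs (a : ℂ) : conj' ((‖a‖ : ℝ) : ℂ) = ((‖a‖ : ℝ) : ℂ) :=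
  Complex.conj_ofReal _

lemma onT_ne_zero {z : ℂ} (h : onT z) : z ≠ 0 := by
  intro h0; rw [h0] at h; simp [onT] at h

lemma onT_conj_mul {z : ℂ} (h : onT z) : conj' z * z = 1 := by
  have := Complex.mul_conj z
  rw [Complex.normSq_eq_norm_sq, h] at this
  rw [mul_comm] at this; simpa [conj'] using this

lemma onT_conj_eq_inv {z : ℂ} (h : onT z) : conj' z = z⁻¹ :=
  eq_inv_of_mul_eq_one_left (onT_conj_mul h)

lemma onT_conj_inv {z : ℂ} (h : onT z) : (conj' z)⁻¹ = z := by
  rw [onT_conj_eq_inv h, inv_inv]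

lemma pstar_coeff (n : ℕ) (p : Polynomial ℂ) (m : ℕ) :
    (pstar n p).coeff m = if m ≤ n then conj' (p.coeff (n - m)) else 0 := by
  rw [pstar, Polynomial.finset_sum_coeff]
  simp only [Polynomial.coeff_C_mul, Polynomial.coeff_X_pow]
  by_cases hm : m ≤ n
  · rw [Finset.sum_eq_single (n - m)]
    · simp [Nat.sub_sub_self hm, hm]
    · intro k hk hne
      simp only [Finset.mem_range] at hk
      have : m ≠ n - k := by omega
      simp [this]
    · intro h; exact absurd (Finset.mem_range.mpr (by omega)) h
  · rw [if_neg hm]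
    apply Finset.sum_eq_zero
    intro k hk
    simp only [Finset.mem_range] at hk
    have : m ≠ n - k := by omega
    simp [this]

lemma pstar_natDegree_le (n : ℕ) (p : Polynomial ℂ) : (pstar n p).natDegree ≤ n := by
  apply Polynomial.natDegree_le_iff_coeff_eq_zero.mpr
  intro m hm
  rw [pstar_coeff]
  simp [Nat.not_le.mpr hm]

lemma pstar_pstar {n : ℕ} {p : Polynomial ℂ} (h : p.natDegree ≤ n) :
    pstar n (pstar n p) = p := by
  ext m
  rw [pstar_coeff]
  by_cases hm : m ≤ n
  · rw [if_pos hm, pstar_coeff, if_pos (Nat.sub_le n m), Nat.sub_sub_self hm, conj'_conj']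
  · rw [if_neg hm]
    exact (Polynomial.coeff_eq_zero_of_natDegree_lt (lt_of_le_of_lt h (Nat.not_le.mp hm))).symm

lemma pstar_C_mul (n : ℕ) (a : ℂ) (p : Polynomial ℂ) :
    pstar n (Polynomial.C a * p) = Polynomial.C (conj' a) * pstar n p := by
  ext m
  rw [Polynomial.coeff_C_mul, pstar_coeff, pstar_coeff]
  by_cases hm : m ≤ n <;> simp [hm, conj'_mul, Polynomial.coeff_C_mul]

lemma pstar_eval {n : ℕ} {p : Polynomial ℂ} (h : p.natDegree ≤ n) {w : ℂ} (hw : w ≠ 0) :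
    (pstar n p).eval w = w ^ n * conj' (p.eval ((conj' w)⁻¹)) := by
  have hconjw : conj' ((conj' w)⁻¹) = w⁻¹ := by
    rw [conj'_inv, conj'_conj']
  rw [Polynomial.eval_eq_sum_range' (lt_of_le_of_lt h (Nat.lt_succ_self n)) ((conj' w)⁻¹)]
  rw [pstar, Polynomial.eval_finset_sum, conj'_sum, Finset.mul_sum]
  apply Finset.sum_congr rfl
  intro k hk
  simp only [Finset.mem_range] at hk
  rw [Polynomial.eval_mul, Polynomial.eval_C, Polynomial.eval_pow, Polynomial.eval_X,
    conj'_mul, conj'_pow, hconjw]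
  have hkn : k ≤ n := by omega
  have hpow : w ^ n * (w ^ k)⁻¹ = w ^ (n - k) := by
    rw [pow_sub₀ w hw hkn]
  rw [inv_pow, ← hpow]
  ring

lemma pstar_eval_onT {n : ℕ} {p : Polynomial ℂ} (h : p.natDegree ≤ n) {z : ℂ} (hz : onT z) :
    (pstar n p).eval z = z ^ n * conj' (p.eval z) := by
  rw [pstar_eval h (onT_ne_zero hz), onT_conj_inv hz]

lemma pstar_eval_zero (n : ℕ) (p : Polynomial ℂ) :
    (pstar n p).eval 0 = conj' (p.coeff n) := by
  rw [show (pstar n p).eval 0 = (pstar n p).coeff 0 by simp [Polynomial.coeff_zero_eq_eval_zero],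
    pstar_coeff]
  simp

-- #### cst / sig layer ####

def cst (α : ℕ → ℂ) (j : ℕ) : ℂ := if α j = 0 then -1 else -(conj' (α j))⁻¹
def Cst (α : ℕ → ℂ) (n : ℕ) : ℂ := ∏ j ∈ Finset.Icc 1 n, cst α j

lemma conj'_ne_zero {a : ℂ} (h : a ≠ 0) : conj' a ≠ 0 := fun h0 => h (conj'_eq_zero.mp h0)

lemma cst_ne_zero (α : ℕ → ℂ) (j : ℕ) : cst α j ≠ 0 := by
  unfold cst
  split
  · exact neg_ne_zero.mpr one_ne_zero
  · next h => exact neg_ne_zero.mpr (inv_ne_zero (conj'_ne_zero h))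

lemma Cst_ne_zero (α : ℕ → ℂ) (n : ℕ) : Cst α n ≠ 0 :=
  Finset.prod_ne_zero_iff.mpr fun j _ => cst_ne_zero α j

lemma sig_ne_zero {α : ℕ → ℂ} (hα : ∀ j, ‖α j‖ < 1) (j : ℕ) : sig α j ≠ 0 := by
  unfold sig
  split
  · exact one_ne_zero
  · next h =>
    apply div_ne_zero (conj'_ne_zero h)
    simpa using h

lemma sigProd_ne_zero {α : ℕ → ℂ} (hα : ∀ j, ‖α j‖ < 1) (n : ℕ) :
    sigProd α n ≠ 0 :=
  Finset.prod_ne_zero_iff.mpr fun j _ => sig_ne_zero hα j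

lemma conj'_sig_mul_cst (α : ℕ → ℂ) (j : ℕ) :
    conj' (sig α j * cst α j) = sig α j * cst α j := by
  unfold sig cst
  split
  · next h => simp [conj'_mul, conj'_neg, conj'_one]
  · next h =>
    rw [conj'_mul, conj'_neg, conj'_inv, conj'_conj', conj'_div, conj'_conj', conj'_abs]
    have habs : ((‖α j‖ : ℝ) : ℂ) ≠ 0 := by simpa using h
    have hc : conj' (α j) ≠ 0 := conj'_ne_zero h
    field_simp

-- #### nonvanishing on/off circle ####

lemma wA_eval (α : ℕ → ℂ) (j : ℕ) (z : ℂ) : (wA α j).eval z = 1 - conj' (α j) * z := by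
  simp [wA]

lemma wB_eval (α : ℕ → ℂ) (j : ℕ) (z : ℂ) :
    (wB α j).eval z = if α j = 0 then -z else 1 - (α j)⁻¹ * z := by
  unfold wB; split <;> simp

lemma wA_eval_ne_zero {α : ℕ → ℂ} (hα : ∀ j, ‖α j‖ < 1) (j : ℕ) {z : ℂ}
    (hz : ‖z‖ ≤ 1) : (wA α j).eval z ≠ 0 := by
  rw [wA_eval]
  intro h
  have h1 : conj' (α j) * z = 1 := by linear_combination -h
  have := congrArg (‖·‖) h1
  rw [norm_mul] at this
  have hc : ‖conj' (α j)‖ = ‖α j‖ := Complex.norm_conj _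
  rw [hc] at this
  simp at this
  nlinarith [hα j, norm_nonneg (α j), norm_nonneg z]

lemma wB_eval_ne_zero {α : ℕ → ℂ} (hα : ∀ j, ‖α j‖ < 1) (j : ℕ) {z : ℂ}
    (hz : 1 ≤ ‖z‖) : (wB α j).eval z ≠ 0 := by
  rw [wB_eval]
  split
  · intro h
    have : ‖z‖ = 0 := by rw [← norm_neg]; simp [h]
    simp at this
    rw [this] at hz; simp at hz; linarith
  · next hne =>
    intro h
    have h1 : (α j)⁻¹ * z = 1 := by linear_combination -h
    have := congrArg (‖·‖) h1
    rw [norm_mul, norm_inv] at this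
    simp only [norm_one] at this
    have haj : 0 < ‖α j‖ := by simpa using hne
    have : ‖z‖ = ‖α j‖ := by
      field_simp at this
      linarith [this]
    nlinarith [hα j]

lemma onT_abs_le {z : ℂ} (h : onT z) : ‖z‖ ≤ 1 := le_of_eq h
lemma onT_abs_ge {z : ℂ} (h : onT z) : 1 ≤ ‖z‖ := ge_of_eq h

lemma piA_eval_ne_zero {α : ℕ → ℂ} (hα : ∀ j, ‖α j‖ < 1) (n : ℕ) {z : ℂ}
    (hz : ‖z‖ ≤ 1) : (piA α n).eval z ≠ 0 := by
  rw [piA, Polynomial.eval_prod]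
  exact Finset.prod_ne_zero_iff.mpr fun j _ => wA_eval_ne_zero hα j hz

lemma piB_eval_ne_zero {α : ℕ → ℂ} (hα : ∀ j, ‖α j‖ < 1) (n : ℕ) {z : ℂ}
    (hz : 1 ≤ ‖z‖) : (piB α n).eval z ≠ 0 := by
  rw [piB, Polynomial.eval_prod]
  exact Finset.prod_ne_zero_iff.mpr fun j _ => wB_eval_ne_zero hα j hz

-- #### the key conjugation identity relating ϖ^β and ϖ^α ####

lemma wB_conj_eval {α : ℕ → ℂ} (j : ℕ) {w : ℂ} (hw : w ≠ 0) :
    conj' ((wB α j).eval ((conj' w)⁻¹)) * w = cst α j * (wA α j).eval w := by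
  rw [wB_eval, wA_eval]
  unfold cst
  split
  · next h =>
    rw [h, conj'_neg, conj'_inv, conj'_conj', conj'_zero]
    field_simp
    ring
  · next h =>
    simp only [conj'_sub, conj'_one, conj'_mul, conj'_inv, conj'_conj']
    have hc : conj' (α j) ≠ 0 := conj'_ne_zero h
    field_simp
    ring

lemma piB_conj_eval {α : ℕ → ℂ} (n : ℕ) {w : ℂ} (hw : w ≠ 0) :
    conj' ((piB α n).eval ((conj' w)⁻¹)) * w ^ n = Cst α n * (piA α n).eval w := by
  have hcard : (Finset.Icc 1 n).card = n := by simp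
  have hpow : w ^ n = ∏ _j ∈ Finset.Icc 1 n, w := by rw [Finset.prod_const, hcard]
  rw [piB, piA, Polynomial.eval_prod, Polynomial.eval_prod, conj'_prod, Cst, hpow,
    ← Finset.prod_mul_distrib, ← Finset.prod_mul_distrib]
  exact Finset.prod_congr rfl fun j _ => wB_conj_eval j hw

-- #### Blaschke layer ####



lemma sig_sq {α : ℕ → ℂ} (j : ℕ) (h : α j ≠ 0) :
    sig α j * sig α j = conj' (α j) / α j := by
  unfold sig
  rw [if_neg h]
  have habs : ((‖α j‖ : ℝ) : ℂ) ≠ 0 := by simpa using h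
  have hsq : α j * conj' (α j) = ((‖α j‖ : ℝ) : ℂ) * ((‖α j‖ : ℝ) : ℂ) := by
    rw [show conj' (α j) = (starRingEnd ℂ) (α j) from rfl, Complex.mul_conj,
      Complex.normSq_eq_norm_sq]
    push_cast
    ring
  field_simp
  linear_combination (conj' (α j)) * hsq

lemma zetaA_mul_wA {α : ℕ → ℂ} (hα : ∀ j, ‖α j‖ < 1) (j : ℕ) {z : ℂ}
    (hz : onT z) :
    zetaA α j z * (wA α j).eval z = sig α j * z * conj' ((wA α j).eval z) := by
  have hden := wA_eval_ne_zero hα j (onT_abs_le hz)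
  have hz0 := onT_ne_zero hz
  rw [wA_eval] at hden ⊢
  unfold zetaA
  split
  · next h => simp [h, conj'_zero, sig, conj'_one]
  · next h =>
    rw [div_mul_cancel₀ _ hden, conj'_sub, conj'_one, conj'_mul, conj'_conj',
      onT_conj_eq_inv hz]
    field_simp

lemma zetaB_mul_wB {α : ℕ → ℂ} (hα : ∀ j, ‖α j‖ < 1) (j : ℕ) {z : ℂ}
    (hz : onT z) :
    zetaB α j z * (wB α j).eval z = sig α j * z * conj' ((wB α j).eval z) := by
  have hden := wB_eval_ne_zero hα j (onT_abs_ge hz)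
  have hz0 := onT_ne_zero hz
  rw [wB_eval] at hden ⊢
  unfold zetaB
  split
  · next h =>
    rw [if_pos h] at hden
    rw [conj'_neg, onT_conj_eq_inv hz]
    simp [sig, h]
    field_simp
  · next h =>
    rw [if_neg h] at hden
    have hEq : (1 : ℂ) - z / α j = 1 - (α j)⁻¹ * z := by rw [div_eq_mul_inv]; ring
    rw [hEq, div_mul_cancel₀ _ hden, conj'_sub, conj'_one, conj'_mul, conj'_inv,
      onT_conj_eq_inv hz]
    have hcα : conj' (α j) ≠ 0 := conj'_ne_zero h
    field_simp

lemma zetaA_mul_zetaB {α : ℕ → ℂ} (hα : ∀ j, ‖α j‖ < 1) (j : ℕ) {z : ℂ}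
    (hz : onT z) : zetaA α j z * zetaB α j z = 1 := by
  have hz0 := onT_ne_zero hz
  unfold zetaA zetaB
  split
  · next h => field_simp
  · next h =>
    have hdenA := wA_eval_ne_zero hα j (onT_abs_le hz)
    have hdenB := wB_eval_ne_zero hα j (onT_abs_ge hz)
    rw [wA_eval] at hdenA
    rw [wB_eval, if_neg h] at hdenB
    have hcα : conj' (α j) ≠ 0 := conj'_ne_zero h
    have hsig := sig_sq j h
    have hdenB' : 1 - z / α j ≠ 0 := by
      intro h0; apply hdenB; rw [← h0, div_eq_mul_inv]; ring
    rw [div_mul_div_comm, div_eq_one_iff_eq (mul_ne_zero hdenA hdenB')]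
    rw [show sig α j * (z - α j) * (sig α j * (z - (conj' (α j))⁻¹)) =
        (sig α j * sig α j) * ((z - α j) * (z - (conj' (α j))⁻¹)) from by ring, hsig]
    field_simp
    ring

lemma BA_mul_piA {α : ℕ → ℂ} (hα : ∀ j, ‖α j‖ < 1) (n : ℕ) {z : ℂ} (hz : onT z) :
    BA α n z * (piA α n).eval z = sigProd α n * z ^ n * conj' ((piA α n).eval z) := by
  have hcard : (Finset.Icc 1 n).card = n := by simp
  have hpow : z ^ n = ∏ _j ∈ Finset.Icc 1 n, z := by rw [Finset.prod_const, hcard]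
  rw [BA, piA, Polynomial.eval_prod, conj'_prod, sigProd, hpow,
    ← Finset.prod_mul_distrib, ← Finset.prod_mul_distrib, ← Finset.prod_mul_distrib]
  exact Finset.prod_congr rfl fun j _ => zetaA_mul_wA hα j hz

lemma BB_mul_piB {α : ℕ → ℂ} (hα : ∀ j, ‖α j‖ < 1) (n : ℕ) {z : ℂ} (hz : onT z) :
    BB α n z * (piB α n).eval z = sigProd α n * z ^ n * conj' ((piB α n).eval z) := by
  have hcard : (Finset.Icc 1 n).card = n := by simp
  have hpow : z ^ n = ∏ _j ∈ Finset.Icc 1 n, z := by rw [Finset.prod_const, hcard]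
  rw [BB, piB, Polynomial.eval_prod, conj'_prod, sigProd, hpow,
    ← Finset.prod_mul_distrib, ← Finset.prod_mul_distrib, ← Finset.prod_mul_distrib]
  exact Finset.prod_congr rfl fun j _ => zetaB_mul_wB hα j hz

lemma BA_mul_BcB {α : ℕ → ℂ} (hα : ∀ j, ‖α j‖ < 1) (c : ℕ → Bool) (n : ℕ)
    {z : ℂ} (hz : onT z) : BA α n z * BcB α c n z = BcA α c n z := by
  have hsplit : BA α n z = (∏ j ∈ aSet c n, zetaA α j z) * ∏ j ∈ bSet c n, zetaA α j z := by
    rw [BA, aSet, bSet, ← Finset.prod_filter_mul_prod_filter_not (Finset.Icc 1 n)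
      (fun j => c j = true)]
    congr 1
    apply Finset.prod_congr _ fun _ _ => rfl
    apply Finset.filter_congr
    intro j _
    simp
  rw [hsplit, BcB, BcA, mul_assoc, ← Finset.prod_mul_distrib]
  have h1 : ∏ j ∈ bSet c n, zetaA α j z * zetaG α c j z = 1 := by
    apply Finset.prod_eq_one
    intro j hj
    have hcj : c j = false := (Finset.mem_filter.mp hj).2
    rw [zetaG, hcj]
    simp only [Bool.false_eq_true, if_false]
    exact zetaA_mul_zetaB hα j hz
  rw [h1, mul_one]
  apply Finset.prod_congr rfl
  intro j hj
  have hcj : c j = true := (Finset.mem_filter.mp hj).2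
  rw [zetaG, hcj]
  simp

lemma BB_mul_BcA {α : ℕ → ℂ} (hα : ∀ j, ‖α j‖ < 1) (c : ℕ → Bool) (n : ℕ)
    {z : ℂ} (hz : onT z) : BB α n z * BcA α c n z = BcB α c n z := by
  have hsplit : BB α n z = (∏ j ∈ aSet c n, zetaB α j z) * ∏ j ∈ bSet c n, zetaB α j z := by
    rw [BB, aSet, bSet, ← Finset.prod_filter_mul_prod_filter_not (Finset.Icc 1 n)
      (fun j => c j = true)]
    congr 1
    apply Finset.prod_congr _ fun _ _ => rfl
    apply Finset.filter_congr
    intro j _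
    simp
  rw [hsplit, BcA, BcB, mul_comm ((∏ j ∈ aSet c n, zetaB α j z)) _, mul_assoc,
    ← Finset.prod_mul_distrib]
  have h1 : ∏ j ∈ aSet c n, zetaB α j z * zetaG α c j z = 1 := by
    apply Finset.prod_eq_one
    intro j hj
    have hcj : c j = true := (Finset.mem_filter.mp hj).2
    rw [zetaG, hcj]
    simp only [if_true]
    rw [mul_comm]
    exact zetaA_mul_zetaB hα j hz
  rw [h1, mul_one]
  apply Finset.prod_congr rfl
  intro j hj
  have hcj : c j = false := (Finset.mem_filter.mp hj).2
  rw [zetaG, hcj]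
  simp

-- #### measure layer ####


lemma ae_onT {μ : Measure ℂ} (hμ : CircleMeasure μ) : ∀ᵐ z ∂μ, onT z :=
  (MeasureTheory.ae_iff).mpr hμ.circ

lemma measurable_conj' : Measurable conj' := Complex.continuous_conj.measurable

lemma measurable_rat (P Q : Polynomial ℂ) : Measurable (fun z => P.eval z / Q.eval z) :=
  (P.continuous_aeval.measurable.comp measurable_id).div
    (Q.continuous_aeval.measurable.comp measurable_id)

lemma measurable_rat' (P Q : Polynomial ℂ) :
    Measurable (fun z : ℂ => P.eval z / Q.eval z) := by
  exact ((Polynomial.continuous P).measurable).div ((Polynomial.continuous Q).measurable)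

lemma onT_iff_sphere (z : ℂ) : onT z ↔ z ∈ Metric.sphere (0 : ℂ) 1 := by
  unfold onT
  rw [mem_sphere_zero_iff_norm]

lemma exists_bound_rat (P Q : Polynomial ℂ) (hQ : ∀ z, onT z → Q.eval z ≠ 0) :
    ∃ M : ℝ, ∀ z, onT z → ‖P.eval z / Q.eval z‖ ≤ M := by
  have hcont : ContinuousOn (fun z : ℂ => P.eval z / Q.eval z) (Metric.sphere (0 : ℂ) 1) := by
    apply ContinuousOn.div (Polynomial.continuous P).continuousOn
      (Polynomial.continuous Q).continuousOn
    intro z hz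
    exact hQ z ((onT_iff_sphere z).mpr hz)
  obtain ⟨M, hM⟩ := (isCompact_sphere (0 : ℂ) 1).exists_bound_of_continuousOn hcont
  exact ⟨M, fun z hz => hM z ((onT_iff_sphere z).mp hz)⟩

lemma integrable_onT {μ : Measure ℂ} (hμ : CircleMeasure μ) {f : ℂ → ℂ}
    (hf : AEStronglyMeasurable f μ) {M : ℝ} (hb : ∀ z, onT z → ‖f z‖ ≤ M) :
    Integrable f μ := by
  haveI := hμ.prob
  exact Integrable.mono' (integrable_const M) hf ((ae_onT hμ).mono fun z hz => hb z hz)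

lemma inn_conj_symm (μ : Measure ℂ) (f g : ℂ → ℂ) : inn μ f g = conj' (inn μ g f) := by
  unfold inn
  rw [show conj' (∫ z, conj' (g z) * f z ∂μ)
      = (starRingEnd ℂ) (∫ z, conj' (g z) * f z ∂μ) from rfl, ← integral_conj]
  congr 1
  funext z
  rw [show ((starRingEnd ℂ) (conj' (g z) * f z) : ℂ) = conj' (conj' (g z) * f z) from rfl,
    conj'_mul, conj'_conj']
  ring

-- the circle is infinite
lemma infinite_onT : {z : ℂ | onT z}.Infinite := by
  have key : ∀ t : ℝ, onT (Complex.mk ((1 - t^2)/(1 + t^2)) (2*t/(1 + t^2))) := by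
    intro t
    have hd : (1 : ℝ) + t^2 > 0 := by positivity
    unfold onT
    rw [Complex.norm_def, Complex.normSq_mk]
    rw [show ((1 - t^2)/(1 + t^2)) * ((1 - t^2)/(1 + t^2)) + (2*t/(1 + t^2)) * (2*t/(1 + t^2))
        = 1 from by field_simp; ring]
    exact Real.sqrt_one
  refine Set.infinite_of_injective_forall_mem
    (f := fun t : ℝ => Complex.mk ((1 - t^2)/(1 + t^2)) (2*t/(1 + t^2))) ?_ (fun t => key t)
  · intro a b hab
    have ha : (1 : ℝ) + a^2 > 0 := by positivity
    have hb : (1 : ℝ) + b^2 > 0 := by positivity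
    have hre : (1 - a^2)/(1 + a^2) = (1 - b^2)/(1 + b^2) := congrArg Complex.re hab
    have him : 2*a/(1 + a^2) = 2*b/(1 + b^2) := congrArg Complex.im hab
    have h1 : (1 : ℝ) + (1 - a^2)/(1 + a^2) = 2/(1 + a^2) := by field_simp; ring
    have h2 : (1 : ℝ) + (1 - b^2)/(1 + b^2) = 2/(1 + b^2) := by field_simp; ring
    have ha' : (2*a/(1 + a^2)) / (2/(1 + a^2)) = a := by field_simp
    have hb' : (2*b/(1 + b^2)) / (2/(1 + b^2)) = b := by field_simp
    have : (2*a/(1 + a^2)) / (2/(1 + a^2)) = (2*b/(1 + b^2)) / (2/(1 + b^2)) := by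
      rw [← h1, ← h2, hre, him]
    rw [ha', hb'] at this
    exact this

lemma poly_zero_of_inn_zero {μ : Measure ℂ} (hμ : CircleMeasure μ) (P Q : Polynomial ℂ)
    (hQ : ∀ z, onT z → Q.eval z ≠ 0) (h : ℂ → ℂ)
    (hmeas : AEStronglyMeasurable h μ)
    (hh : ∀ z, onT z → h z = P.eval z / Q.eval z)
    (hzero : inn μ h h = 0) : P = 0 := by
  haveI := hμ.prob
  -- rewrite inn as a real integral
  have hpt : ∀ z, conj' (h z) * h z = ((‖h z‖^2 : ℝ) : ℂ) := by
    intro z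
    rw [show conj' (h z) = (starRingEnd ℂ) (h z) from rfl]
    rw [mul_comm, Complex.mul_conj, Complex.normSq_eq_norm_sq]
  have h1 : inn μ h h = ((∫ z, ‖h z‖^2 ∂μ : ℝ) : ℂ) := by
    unfold inn
    rw [show (fun z => conj' (h z) * h z) = fun z => ((‖h z‖^2 : ℝ) : ℂ) from funext hpt]
    exact integral_ofReal
  rw [h1] at hzero
  have hzero' : (∫ z, ‖h z‖^2 ∂μ : ℝ) = 0 := by exact_mod_cast hzero
  -- integrability of ‖h‖²
  obtain ⟨M, hM⟩ := exists_bound_rat P Q hQ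
  have hbound : ∀ z, onT z → ‖h z‖ ≤ M := fun z hz => by rw [hh z hz]; exact hM z hz
  have hM0 : 0 ≤ M := by
    obtain ⟨z, hz⟩ := infinite_onT.nonempty
    exact le_trans (norm_nonneg _) (hbound z hz)
  have hmeas2 : AEStronglyMeasurable (fun z => ‖h z‖^2) μ := by
    have h2 : (fun z => ‖h z‖^2) = fun z => ‖h z‖ * ‖h z‖ := by funext z; ring
    rw [h2]
    exact hmeas.norm.mul hmeas.norm
  have hint2 : Integrable (fun z => ‖h z‖^2) μ := by
    apply Integrable.mono' (integrable_const (M^2)) hmeas2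
    apply (ae_onT hμ).mono
    intro z hz
    rw [Real.norm_eq_abs, abs_of_nonneg (sq_nonneg _)]
    have := hbound z hz
    nlinarith [norm_nonneg (h z)]
  have hae : (fun z => ‖h z‖^2) =ᵐ[μ] 0 :=
    (integral_eq_zero_iff_of_nonneg (fun z => sq_nonneg _) hint2).mp hzero'
  -- a.e. P.eval z = 0
  have haeP : ∀ᵐ z ∂μ, P.eval z = 0 := by
    filter_upwards [hae, ae_onT hμ] with z hz1 hz2
    have hhz : h z = 0 := by
      have : ‖h z‖^2 = 0 := hz1
      have : ‖h z‖ = 0 := by nlinarith [norm_nonneg (h z)]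
      simpa using this
    have := hh z hz2
    rw [hhz] at this
    have := (div_eq_zero_iff.mp this.symm).resolve_right (hQ z hz2)
    exact this
  -- conclude P = 0
  by_contra hP
  have hfin : {z : ℂ | P.IsRoot z}.Finite := Polynomial.finite_setOf_isRoot hP
  have hU : IsOpen {z : ℂ | P.eval z ≠ 0} := by
    have : {z : ℂ | P.eval z ≠ 0} = (fun z => P.eval z) ⁻¹' {0}ᶜ := rfl
    rw [this]
    exact (isOpen_compl_singleton).preimage (Polynomial.continuous P)
  have hne : ({z : ℂ | P.eval z ≠ 0} ∩ {z | onT z}).Nonempty := by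
    obtain ⟨z, hz1, hz2⟩ := (infinite_onT.diff hfin).nonempty
    exact ⟨z, hz2, hz1⟩
  have hpos := hμ.pos _ hU hne
  have : μ {z : ℂ | P.eval z ≠ 0} = 0 := by
    apply measure_mono_null _ (ae_iff.mp haeP)
    intro z hz
    exact hz
  rw [this] at hpos
  exact lt_irrefl _ hpos

-- #### ORF structures (copies of the graded file's defs) ####


-- #### inn helpers ####

lemma inn_congr_onT {μ : Measure ℂ} (hμ : CircleMeasure μ) {f f' g g' : ℂ → ℂ}
    (hf : ∀ z, onT z → f z = f' z) (hg : ∀ z, onT z → g z = g' z) :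
    inn μ f g = inn μ f' g' :=
  integral_congr_ae ((ae_onT hμ).mono fun z hz => by simp only [hf z hz, hg z hz])

lemma inn_add_right {μ : Measure ℂ} {f g1 g2 : ℂ → ℂ}
    (h1 : Integrable (fun z => conj' (f z) * g1 z) μ)
    (h2 : Integrable (fun z => conj' (f z) * g2 z) μ) :
    inn μ f (fun z => g1 z + g2 z) = inn μ f g1 + inn μ f g2 := by
  unfold inn
  rw [← integral_add h1 h2]
  congr 1
  funext z
  ring

lemma inn_mul_right (μ : Measure ℂ) (f g : ℂ → ℂ) (a : ℂ) :
    inn μ f (fun z => a * g z) = a * inn μ f g := by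
  unfold inn
  rw [show a * ∫ z, conj' (f z) * g z ∂μ = a • ∫ z, conj' (f z) * g z ∂μ from rfl,
    ← integral_smul]
  congr 1
  funext z
  simp only [smul_eq_mul]
  ring

lemma integrable_conj_rat_mul {μ : Measure ℂ} (hμ : CircleMeasure μ)
    (P1 Q1 P2 Q2 : Polynomial ℂ)
    (hQ1 : ∀ z, onT z → Q1.eval z ≠ 0) (hQ2 : ∀ z, onT z → Q2.eval z ≠ 0) :
    Integrable (fun z => conj' (P1.eval z / Q1.eval z) * (P2.eval z / Q2.eval z)) μ := by
  obtain ⟨M1, hM1⟩ := exists_bound_rat P1 Q1 hQ1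
  obtain ⟨M2, hM2⟩ := exists_bound_rat P2 Q2 hQ2
  obtain ⟨z0, hz0⟩ := infinite_onT.nonempty
  have hM10 : 0 ≤ M1 := le_trans (norm_nonneg _) (hM1 z0 hz0)
  have hmeas : AEStronglyMeasurable
      (fun z => conj' (P1.eval z / Q1.eval z) * (P2.eval z / Q2.eval z)) μ := by
    apply Measurable.aestronglyMeasurable
    exact (measurable_conj'.comp (measurable_rat' P1 Q1)).mul (measurable_rat' P2 Q2)
  apply integrable_onT hμ hmeas (M := M1 * M2)
  intro z hz
  rw [norm_mul]
  have hc : ‖conj' (P1.eval z / Q1.eval z)‖ = ‖P1.eval z / Q1.eval z‖ :=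
    RCLike.norm_conj _
  rw [hc]
  exact mul_le_mul (hM1 z hz) (hM2 z hz) (norm_nonneg _) hM10

-- #### substar transfer identities ####

lemma conj_ratB_eq {α : ℕ → ℂ} (hα : ∀ j, ‖α j‖ < 1) (m : ℕ)
    (p : Polynomial ℂ) (hp : p.natDegree ≤ m) {z : ℂ} (hz : onT z) :
    conj' (p.eval z / (piB α m).eval z)
      = (Polynomial.C (Cst α m)⁻¹ * pstar m p).eval z / (piA α m).eval z := by
  have hz0 := onT_ne_zero hz
  have hpiA := piA_eval_ne_zero hα m (onT_abs_le hz)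
  have hpiB := piB_eval_ne_zero hα m (onT_abs_ge hz)
  have hCst := Cst_ne_zero α m
  have h1 : conj' ((piB α m).eval z) * z ^ m = Cst α m * (piA α m).eval z := by
    have := piB_conj_eval (α := α) m hz0
    rwa [onT_conj_inv hz] at this
  have h2 : (pstar m p).eval z = z ^ m * conj' (p.eval z) := pstar_eval_onT hp hz
  have hconjpiB : conj' ((piB α m).eval z) ≠ 0 := conj'_ne_zero hpiB
  have hzm : z ^ m ≠ 0 := pow_ne_zero _ hz0
  have h3 : conj' ((piB α m).eval z) = Cst α m * (piA α m).eval z / z ^ m := by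
    rw [← h1]; field_simp
  rw [conj'_div, Polynomial.eval_mul, Polynomial.eval_C, h2, h3]
  field_simp

lemma conj_ratA_eq {α : ℕ → ℂ} (hα : ∀ j, ‖α j‖ < 1) (m : ℕ)
    (p : Polynomial ℂ) (hp : p.natDegree ≤ m) {z : ℂ} (hz : onT z) :
    conj' (p.eval z / (piA α m).eval z)
      = (Polynomial.C (conj' (Cst α m)) * pstar m p).eval z / (piB α m).eval z := by
  have hz0 := onT_ne_zero hz
  have hpiA := piA_eval_ne_zero hα m (onT_abs_le hz)
  have hpiB := piB_eval_ne_zero hα m (onT_abs_ge hz)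
  have hCst := Cst_ne_zero α m
  have h1 : conj' ((piB α m).eval z) * z ^ m = Cst α m * (piA α m).eval z := by
    have := piB_conj_eval (α := α) m hz0
    rwa [onT_conj_inv hz] at this
  -- conjugate of h1
  have hzm : z ^ m ≠ 0 := pow_ne_zero _ hz0
  have h1' : (piB α m).eval z = conj' (Cst α m) * conj' ((piA α m).eval z) * z ^ m := by
    have h := congrArg conj' h1
    rw [conj'_mul, conj'_mul, conj'_conj', conj'_pow, onT_conj_eq_inv hz, inv_pow,
      mul_inv_eq_iff_eq_mul₀ hzm] at h
    exact h
  have h2 : (pstar m p).eval z = z ^ m * conj' (p.eval z) := pstar_eval_onT hp hz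
  have hconjpiA : conj' ((piA α m).eval z) ≠ 0 := conj'_ne_zero hpiA
  have hconjCst : conj' (Cst α m) ≠ 0 := conj'_ne_zero hCst
  rw [conj'_div, Polynomial.eval_mul, Polynomial.eval_C, h2, h1']
  field_simp

lemma piA_succ (α : ℕ → ℂ) (m : ℕ) : piA α (m+1) = piA α m * wA α (m+1) := by
  unfold piA
  rw [Finset.prod_Icc_succ_top (by omega : 1 ≤ m+1)]

lemma keyAux {α : ℕ → ℂ} (hα : ∀ j, ‖α j‖ < 1) {μ : Measure ℂ}
    (hμ : CircleMeasure μ) {φA φB : ℕ → ℂ → ℂ} {pA pB : ℕ → Polynomial ℂ}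
    (hA : IsORF μ (piA α) φA pA) (hB : IsORF μ (piB α) φB pB)
    (m : ℕ) :
    ∃ cc : ℂ, cc * conj' cc = 1 ∧
      pstar (m+1) (pB (m+1)) = Polynomial.C (Cst α (m+1) * cc) * pA (m+1) := by
  classical
  set n := m + 1 with hn
  -- the candidate function g = (φB n)_* as a rational function
  set qB : Polynomial ℂ := Polynomial.C (Cst α n)⁻¹ * pstar n (pB n) with hqBdef
  have hdegqB : qB.natDegree ≤ n :=
    le_trans (Polynomial.natDegree_C_mul_le _ _) (pstar_natDegree_le n _)
  set g : ℂ → ℂ := fun z => qB.eval z / (piA α n).eval z with hgdef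
  have hgconj : ∀ z, onT z → g z = conj' (φB n z) := by
    intro z hz
    rw [hB.rep n z, conj_ratB_eq hα n (pB n) (hB.deg n) hz]
  -- decomposition qB = C cc * pA n + r * wA n
  obtain ⟨cc, r, hrdeg, hq⟩ : ∃ cc : ℂ, ∃ r : Polynomial ℂ, r.natDegree ≤ m ∧
      qB = Polynomial.C cc * pA n + r * wA α n := by
    by_cases h0 : α n = 0
    · have hwA1 : wA α n = 1 := by
        unfold wA
        rw [h0, conj'_zero]
        simp
      have hcoeff : (pA n).coeff n ≠ 0 := by
        intro hc
        apply hA.notmem n (by omega)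
        have hdeg' : (pA n).natDegree ≤ m := by
          apply Polynomial.natDegree_le_iff_coeff_eq_zero.mpr
          intro k hk
          by_cases hkn : k = n
          · rw [hkn]; exact hc
          · exact Polynomial.coeff_eq_zero_of_natDegree_lt
              (lt_of_le_of_lt (hA.deg n) (by omega))
        refine ⟨pA n, hdeg', ?_⟩
        intro z hz
        rw [hA.rep n z]
        have : piA α n = piA α m := by rw [hn, piA_succ, ← hn, hwA1, mul_one]
        rw [this]
        rfl
      refine ⟨qB.coeff n / (pA n).coeff n, qB - Polynomial.C (qB.coeff n / (pA n).coeff n) * pA n,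
        ?_, by rw [hwA1]; ring⟩
      apply Polynomial.natDegree_le_iff_coeff_eq_zero.mpr
      intro k hk
      by_cases hkn : k = n
      · have hcancel : (Polynomial.C (qB.coeff n / (pA n).coeff n) * pA n).coeff n
            = qB.coeff n := by
          rw [Polynomial.coeff_C_mul, div_mul_cancel₀ _ hcoeff]
        rw [hkn, Polynomial.coeff_sub, hcancel, sub_self]
      · rw [hn] at hkn
        have hlt : n < k := by rw [hn]; omega
        rw [Polynomial.coeff_sub,
          Polynomial.coeff_eq_zero_of_natDegree_lt (lt_of_le_of_lt hdegqB hlt),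
          Polynomial.coeff_eq_zero_of_natDegree_lt (lt_of_le_of_lt
            (le_trans (Polynomial.natDegree_C_mul_le _ _) (hA.deg n)) hlt)]
        ring
    · -- α n ≠ 0
      set d := -(conj' (α n)) with hd
      have hcn : conj' (α n) ≠ 0 := conj'_ne_zero h0
      have hd0 : d ≠ 0 := neg_ne_zero.mpr hcn
      set b := (conj' (α n))⁻¹ with hb
      have hb0 : b ≠ 0 := inv_ne_zero hcn
      have hwAfac : wA α n = Polynomial.C d * (Polynomial.X - Polynomial.C b) := by
        have h1 : d * b = -1 := by rw [hd, hb]; field_simp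
        rw [wA, mul_sub, ← Polynomial.C_mul, h1]
        simp only [Polynomial.C_neg, Polynomial.C_1, hd]
        ring
      have hzbne : ∀ z : ℂ, onT z → z - b ≠ 0 := by
        intro z hz hzb
        have hzb' : z = b := by linear_combination hzb
        have h1 : b * conj' (α n) = 1 := inv_mul_cancel₀ hcn
        have := congrArg (‖·‖) h1
        rw [norm_mul, norm_one] at this
        rw [← hzb', hz, one_mul] at this
        rw [show ‖conj' (α n)‖ = ‖α n‖ from Complex.norm_conj _] at this
        have := hα n
        simp_all
      have hpAb : (pA n).eval b ≠ 0 := by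
        intro hroot
        apply hA.notmem n (by omega)
        obtain ⟨s, hs⟩ := Polynomial.dvd_iff_isRoot.mpr hroot
        have hsdeg : s.natDegree ≤ m := by
          by_cases hs0 : s = 0
          · simp [hs0]
          · have hdeg := hA.deg n
            rw [hs, Polynomial.natDegree_mul (Polynomial.X_sub_C_ne_zero b) hs0,
              Polynomial.natDegree_X_sub_C] at hdeg
            omega
        refine ⟨Polynomial.C d⁻¹ * s,
          le_trans (Polynomial.natDegree_C_mul_le _ _) hsdeg, ?_⟩
        intro z hz
        rw [hA.rep n z, hs, hn, piA_succ, ← hn, hwAfac]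
        simp only [Polynomial.eval_mul, Polynomial.eval_sub, Polynomial.eval_X,
          Polynomial.eval_C]
        have h1 := hzbne z hz
        have h2 := piA_eval_ne_zero hα m (onT_abs_le hz)
        field_simp
        simp [show n - 1 = m by omega, h2]
      refine ⟨qB.eval b / (pA n).eval b, ?_⟩
      set cc := qB.eval b / (pA n).eval b with hcc
      set q2 := qB - Polynomial.C cc * pA n with hq2
      have hq2b : q2.IsRoot b := by
        unfold Polynomial.IsRoot
        rw [hq2]
        simp only [Polynomial.eval_sub, Polynomial.eval_mul, Polynomial.eval_C]
        rw [hcc, div_mul_cancel₀ _ hpAb, sub_self]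
      obtain ⟨s, hs⟩ := Polynomial.dvd_iff_isRoot.mpr hq2b
      have hq2deg : q2.natDegree ≤ n :=
        le_trans (Polynomial.natDegree_sub_le _ _)
          (max_le hdegqB (le_trans (Polynomial.natDegree_C_mul_le _ _) (hA.deg n)))
      have hsdeg : s.natDegree ≤ m := by
        by_cases hs0 : s = 0
        · simp [hs0]
        · have := hq2deg
          rw [hs, Polynomial.natDegree_mul (Polynomial.X_sub_C_ne_zero b) hs0,
            Polynomial.natDegree_X_sub_C] at this
          omega
      refine ⟨Polynomial.C d⁻¹ * s,
        le_trans (Polynomial.natDegree_C_mul_le _ _) hsdeg, ?_⟩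
      have hrw : Polynomial.C d⁻¹ * s * wA α n = q2 := by
        rw [hwAfac, show Polynomial.C d⁻¹ * s * (Polynomial.C d * (Polynomial.X -
          Polynomial.C b)) = (Polynomial.C d⁻¹ * Polynomial.C d) *
          ((Polynomial.X - Polynomial.C b) * s) from by ring, ← Polynomial.C_mul,
          inv_mul_cancel₀ hd0, Polynomial.C_1, one_mul, ← hs]
      rw [hrw, hq2]
      ring
  -- the function h and memberships
  set hF : ℂ → ℂ := fun z => r.eval z / (piA α m).eval z with hFdef
  have hhmem : hF ∈ Lsp (piA α) m := ⟨r, hrdeg, fun z _ => rfl⟩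
  have hgdecomp : ∀ z, onT z → g z = cc * φA n z + hF z := by
    intro z hz
    have hwAz := wA_eval_ne_zero hα n (onT_abs_le hz)
    have hpiAm := piA_eval_ne_zero hα m (onT_abs_le hz)
    rw [hA.rep n z, hgdef]
    simp only
    rw [hq, hn, piA_succ, ← hn]
    simp only [Polynomial.eval_add, Polynomial.eval_mul, Polynomial.eval_C]
    field_simp
    ring_nf
    have hPF : (piA α m).eval z * hF z = r.eval z := by simp only [hFdef]; field_simp
    rw [mul_assoc, hPF]; ring
  -- orthogonality transfer: g ⟂ Lsp (piA α) m
  have horthg : ∀ (f : ℂ → ℂ) (p : Polynomial ℂ), p.natDegree ≤ m →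
      (∀ z, onT z → f z = p.eval z / (piA α m).eval z) → inn μ g f = 0 := by
    intro f p hp hfrep
    set f' : ℂ → ℂ := fun z =>
      (Polynomial.C (conj' (Cst α m)) * pstar m p).eval z / (piB α m).eval z with hf'def
    have hf'mem : f' ∈ Lsp (piB α) m :=
      ⟨_, le_trans (Polynomial.natDegree_C_mul_le _ _) (pstar_natDegree_le _ _),
        fun z _ => rfl⟩
    have h1 : inn μ (φB n) f' = 0 := hB.orth n (by omega) f' hf'mem
    have hf'conj : ∀ z, onT z → f' z = conj' (f z) := by
      intro z hz
      rw [hfrep z hz, conj_ratA_eq hα m p hp hz]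
    have h2 : inn μ g f = conj' (inn μ (φB n) f') := by
      unfold inn
      rw [show conj' (∫ z, conj' (φB n z) * f' z ∂μ)
        = (starRingEnd ℂ) (∫ z, conj' (φB n z) * f' z ∂μ) from rfl, ← integral_conj]
      apply integral_congr_ae
      apply (ae_onT hμ).mono
      intro z hz
      simp only
      rw [show ((starRingEnd ℂ) (conj' (φB n z) * f' z) : ℂ)
        = conj' (conj' (φB n z) * f' z) from rfl, conj'_mul, conj'_conj',
        hgconj z hz, conj'_conj', hf'conj z hz, conj'_conj']
    rw [h2, h1, conj'_zero]
  -- integrability facts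
  have hφAfun : φA n = fun z => (pA n).eval z / (piA α n).eval z := funext (hA.rep n)
  have hQn : ∀ z, onT z → (piA α n).eval z ≠ 0 :=
    fun z hz => piA_eval_ne_zero hα n (onT_abs_le hz)
  have hQm : ∀ z, onT z → (piA α m).eval z ≠ 0 :=
    fun z hz => piA_eval_ne_zero hα m (onT_abs_le hz)
  have Igg : Integrable (fun z => conj' (g z) * g z) μ :=
    integrable_conj_rat_mul hμ qB (piA α n) qB (piA α n) hQn hQn
  have IgφA : Integrable (fun z => conj' (g z) * φA n z) μ := by
    rw [hφAfun]
    exact integrable_conj_rat_mul hμ qB (piA α n) (pA n) (piA α n) hQn hQn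
  have Igh : Integrable (fun z => conj' (g z) * hF z) μ :=
    integrable_conj_rat_mul hμ qB (piA α n) r (piA α m) hQn hQm
  have IφAφA : Integrable (fun z => conj' (φA n z) * φA n z) μ := by
    rw [hφAfun]
    exact integrable_conj_rat_mul hμ (pA n) (piA α n) (pA n) (piA α n) hQn hQn
  have IφAg : Integrable (fun z => conj' (φA n z) * g z) μ := by
    rw [hφAfun]
    exact integrable_conj_rat_mul hμ (pA n) (piA α n) qB (piA α n) hQn hQn
  have IφAh : Integrable (fun z => conj' (φA n z) * hF z) μ := by
    rw [hφAfun]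
    exact integrable_conj_rat_mul hμ (pA n) (piA α n) r (piA α m) hQn hQm
  -- inner-product values
  have hnormφA : inn μ (φA n) (φA n) = 1 := hA.norm n
  have horthφAh : inn μ (φA n) hF = 0 := hA.orth n (by omega) hF hhmem
  have horthgh : inn μ g hF = 0 := horthg hF r hrdeg (fun z _ => rfl)
  have hinn_gg : inn μ g g = 1 := by
    have h2 : inn μ g g = conj' (inn μ (φB n) (φB n)) := by
      unfold inn
      rw [show conj' (∫ z, conj' (φB n z) * φB n z ∂μ)
        = (starRingEnd ℂ) (∫ z, conj' (φB n z) * φB n z ∂μ) from rfl, ← integral_conj]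
      apply integral_congr_ae
      apply (ae_onT hμ).mono
      intro z hz
      simp only
      rw [show ((starRingEnd ℂ) (conj' (φB n z) * φB n z) : ℂ)
        = conj' (conj' (φB n z) * φB n z) from rfl, conj'_mul, conj'_conj',
        hgconj z hz, conj'_conj']
    rw [h2, hB.norm n, conj'_one]
  have hinn_φA_g : inn μ (φA n) g = cc := by
    have e : inn μ (φA n) g = inn μ (φA n) (fun z => cc * φA n z + hF z) :=
      inn_congr_onT hμ (fun _ _ => rfl) hgdecomp
    have I1 : Integrable (fun z => conj' (φA n z) * (cc * φA n z)) μ := by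
      have : (fun z => conj' (φA n z) * (cc * φA n z))
          = fun z => cc * (conj' (φA n z) * φA n z) := funext fun z => by ring
      rw [this]
      exact IφAφA.const_mul cc
    rw [e, inn_add_right I1 IφAh, inn_mul_right, hnormφA, horthφAh]
    ring
  have hinn_g_φA : inn μ g (φA n) = conj' cc := by
    rw [inn_conj_symm, hinn_φA_g]
  have hcc1 : cc * conj' cc = 1 := by
    have e : inn μ g g = inn μ g (fun z => cc * φA n z + hF z) :=
      inn_congr_onT hμ (fun _ _ => rfl) hgdecomp
    have I1 : Integrable (fun z => conj' (g z) * (cc * φA n z)) μ := by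
      have : (fun z => conj' (g z) * (cc * φA n z))
          = fun z => cc * (conj' (g z) * φA n z) := funext fun z => by ring
      rw [this]
      exact IgφA.const_mul cc
    rw [hinn_gg] at e
    rw [inn_add_right I1 Igh, inn_mul_right, hinn_g_φA, horthgh] at e
    linear_combination -e
  -- inn hF hF = 0
  have hinn_hh : inn μ hF hF = 0 := by
    have e : inn μ hF hF = inn μ (fun z => g z - cc * φA n z) hF :=
      inn_congr_onT hμ (fun z hz => by rw [hgdecomp z hz]; ring) (fun _ _ => rfl)
    have hfun : (fun z => conj' ((fun z => g z - cc * φA n z) z) * hF z)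
        = fun z => conj' (g z) * hF z - conj' cc * (conj' (φA n z) * hF z) := by
      funext z
      simp only
      rw [conj'_sub, conj'_mul]
      ring
    have hstep : inn μ (fun z => g z - cc * φA n z) hF
        = inn μ g hF - conj' cc * inn μ (φA n) hF := by
      unfold inn
      rw [hfun, integral_sub Igh (IφAh.const_mul (conj' cc))]
      congr 1
      rw [show (conj' cc) * ∫ z, conj' (φA n z) * hF z ∂μ
        = (conj' cc) • ∫ z, conj' (φA n z) * hF z ∂μ from rfl, ← integral_smul]
      congr 1
    rw [e, hstep, horthgh, horthφAh]
    ring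
  have hr0 : r = 0 :=
    poly_zero_of_inn_zero hμ r (piA α m) hQm hF
      (measurable_rat' r (piA α m)).aestronglyMeasurable (fun z _ => rfl) hinn_hh
  refine ⟨cc, hcc1, ?_⟩
  have hqBcc : qB = Polynomial.C cc * pA n := by
    rw [hq, hr0]
    ring
  have hCst := Cst_ne_zero α n
  calc pstar n (pB n)
      = Polynomial.C (Cst α n) * (Polynomial.C (Cst α n)⁻¹ * pstar n (pB n)) := by
        rw [← mul_assoc, ← Polynomial.C_mul, mul_inv_cancel₀ hCst, Polynomial.C_1, one_mul]
    _ = Polynomial.C (Cst α n) * (Polynomial.C cc * pA n) := by rw [← hqBdef, hqBcc]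
    _ = Polynomial.C (Cst α n * cc) * pA n := by rw [Polynomial.C_mul]; ring

-- #### posR helpers ####

lemma posR_ne_zero {z : ℂ} (h : posR z) : z ≠ 0 := by
  intro h0
  rw [h0] at h
  simpa using h.1

lemma posR_conj {z : ℂ} (h : posR z) : posR (conj' z) :=
  ⟨by simpa [conj'] using h.1, by simp [conj', h.2]⟩

lemma posR_real {z : ℂ} (h : posR z) : z = (z.re : ℂ) := by
  apply Complex.ext <;> simp [h.2]

lemma posR_div {x y : ℂ} (hx : posR x) (hy : posR y) : posR (x / y) := by
  rw [posR_real hx, posR_real hy, ← Complex.ofReal_div]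
  exact ⟨by simpa using div_pos hx.1 hy.1, by simp⟩

lemma unit_posR_eq_one {c : ℂ} (h1 : c * conj' c = 1) (h2 : posR (conj' c)) : c = 1 := by
  have him : c.im = 0 := by simpa [conj', neg_eq_zero] using h2.2
  have hre : 0 < c.re := by simpa [conj'] using h2.1
  have hsq : Complex.normSq c = 1 := by
    have h3 := Complex.mul_conj c
    rw [show (starRingEnd ℂ) c = conj' c from rfl, h1] at h3
    exact_mod_cast h3.symm
  rw [Complex.normSq_apply, him] at hsq
  have hce : c.re = 1 := by nlinarith
  apply Complex.ext <;> simp [hce, him]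

-- #### leading coefficient of piB and value of piA at 0 ####

lemma wB_ne_zero (α : ℕ → ℂ) (j : ℕ) : wB α j ≠ 0 := by
  unfold wB
  split
  · simp [Polynomial.X_ne_zero]
  · next h =>
    intro hw
    have h2 := congrArg (fun p => Polynomial.coeff p 1) hw
    simp only [Polynomial.coeff_sub, Polynomial.coeff_one, Polynomial.coeff_C_mul,
      Polynomial.coeff_X_one, Polynomial.coeff_zero, mul_one] at h2
    have h3 : α j = 0 := by
      have := h2
      simp at this
      exact this
    exact h h3

lemma wB_natDegree (α : ℕ → ℂ) (j : ℕ) : (wB α j).natDegree = 1 := by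
  unfold wB
  split
  · simp
  · next h =>
    have h2 : (1 : Polynomial ℂ) - Polynomial.C (α j)⁻¹ * Polynomial.X
        = Polynomial.C (-(α j)⁻¹) * Polynomial.X + Polynomial.C 1 := by
      simp only [Polynomial.C_neg, Polynomial.C_1]
      ring
    rw [h2]
    exact Polynomial.natDegree_linear (neg_ne_zero.mpr (inv_ne_zero h))

lemma wB_leadingCoeff (α : ℕ → ℂ) (j : ℕ) : (wB α j).leadingCoeff = conj' (cst α j) := by
  rw [Polynomial.leadingCoeff, wB_natDegree]
  unfold wB cst
  split
  · next h => simp [conj'_neg, conj'_one]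
  · next h =>
    rw [conj'_neg, conj'_inv, conj'_conj']
    simp [Polynomial.coeff_sub, Polynomial.coeff_one, Polynomial.coeff_C_mul]

lemma piB_coeff_top (α : ℕ → ℂ) (n : ℕ) : (piB α n).coeff n = conj' (Cst α n) := by
  have hdeg : (piB α n).natDegree = n := by
    rw [piB, Polynomial.natDegree_prod _ _ (fun j _ => wB_ne_zero α j)]
    simp [wB_natDegree]
  have hlead : (piB α n).leadingCoeff = conj' (Cst α n) := by
    rw [piB, Polynomial.leadingCoeff_prod]
    rw [Cst, conj'_prod]
    exact Finset.prod_congr rfl fun j _ => wB_leadingCoeff α j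
  calc (piB α n).coeff n = (piB α n).coeff (piB α n).natDegree := by rw [hdeg]
    _ = (piB α n).leadingCoeff := Polynomial.coeff_natDegree
    _ = conj' (Cst α n) := hlead

lemma piA_eval_zero (α : ℕ → ℂ) (n : ℕ) : (piA α n).eval 0 = 1 := by
  rw [piA, Polynomial.eval_prod]
  apply Finset.prod_eq_one
  intro j _
  rw [wA_eval]
  ring

lemma sigProd_Cst_real (α : ℕ → ℂ) (n : ℕ) :
    conj' (sigProd α n * Cst α n) = sigProd α n * Cst α n := by
  rw [sigProd, Cst, ← Finset.prod_mul_distrib, conj'_prod]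
  exact Finset.prod_congr rfl fun j _ => conj'_sig_mul_cst α j

-- #### the key lemma with normalization ####

lemma key {α : ℕ → ℂ} (hα : ∀ j, ‖α j‖ < 1) {μ : Measure ℂ}
    (hμ : CircleMeasure μ) {φA φB : ℕ → ℂ → ℂ} {pA pB : ℕ → Polynomial ℂ}
    (hA : IsORF μ (piA α) φA pA) (hB : IsORF μ (piB α) φB pB)
    (hnA : ∀ n, normA α pA n) (hnB : ∀ n, normB α pB n) (n : ℕ) :
    pstar n (pB n) = Polynomial.C (Cst α n) * pA n := by
  cases n with
  | zero =>
    have h1 : pB 0 = 1 := hB.p0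
    have h2 : pA 0 = 1 := hA.p0
    have h3 : Cst α 0 = 1 := by simp [Cst]
    rw [h1, h2, h3]
    unfold pstar
    simp [conj'_one]
  | succ m =>
    set n := m + 1 with hn
    obtain ⟨cc, hcc, hP⟩ := keyAux hα hμ hA hB m
    rw [← hn] at hP
    suffices hcc1 : cc = 1 by
      rw [hP, hcc1, mul_one]
    -- use the normalizations
    have hreal : conj' (sigProd α n) * conj' (Cst α n) = sigProd α n * Cst α n := by
      rw [← conj'_mul]
      exact sigProd_Cst_real α n
    have hsig0 := sigProd_ne_zero hα n
    have hCst0 := Cst_ne_zero α n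
    have hnAn := hnA n
    unfold normA at hnAn
    have hnBn := hnB n
    unfold normB at hnBn
    by_cases h0 : α n = 0
    · -- β_n = ∞ case
      rw [if_pos h0] at hnBn
      have e1 : (pstar n (pB n)).coeff n = Cst α n * cc * (pA n).coeff n := by
        rw [hP, Polynomial.coeff_C_mul]
      have e2 : (piB α n).coeff n = conj' (Cst α n) := piB_coeff_top α n
      have e3 : (piA α n).eval (α n) = 1 := by rw [h0]; exact piA_eval_zero α n
      have e4 : (pstar n (pA n)).eval (α n) = conj' ((pA n).coeff n) := by
        rw [h0]; exact pstar_eval_zero n (pA n)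
      -- value identities
      have hvB : conj' (sigProd α n * (pstar n (pB n)).coeff n / (piB α n).coeff n)
          = conj' cc * (sigProd α n * (pstar n (pA n)).eval (α n) / (piA α n).eval (α n)) := by
        rw [e1, e2, e3, e4, conj'_div, conj'_mul, conj'_mul, conj'_mul, conj'_conj']
        field_simp
        linear_combination conj' cc * conj' ((pA n).coeff n) * hreal
      have hposB : posR (conj' cc *
          (sigProd α n * (pstar n (pA n)).eval (α n) / (piA α n).eval (α n))) := by
        rw [← hvB]; exact posR_conj hnBn
      have hvA0 : posR (sigProd α n * (pstar n (pA n)).eval (α n) / (piA α n).eval (α n)) :=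
        hnAn
      have : posR (conj' cc) := by
        have hq := posR_div hposB hvA0
        rwa [mul_div_assoc, div_self (posR_ne_zero hvA0), mul_one] at hq
      exact unit_posR_eq_one hcc this
    · -- β_n finite case
      rw [if_neg h0] at hnBn
      have hcn : conj' (α n) ≠ 0 := conj'_ne_zero h0
      set b := (conj' (α n))⁻¹ with hb
      have hb0 : b ≠ 0 := inv_ne_zero hcn
      have hpow : (α n) ^ n ≠ 0 := pow_ne_zero _ h0
      have habsconj : ‖conj' (α n)‖ = ‖α n‖ := Complex.norm_conj (α n)
      have habs0 : ‖α n‖ ≠ 0 := by simpa using h0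
      have habsmul : ‖b‖ * ‖α n‖ = 1 := by
        rw [hb, norm_inv, habsconj]
        field_simp
      have habsb : 1 ≤ ‖b‖ := by
        nlinarith [hα n, norm_nonneg (α n), norm_nonneg b,
          (show 0 < ‖α n‖ from lt_of_le_of_ne (norm_nonneg _) (Ne.symm habs0))]
      have hpiBb : (piB α n).eval b ≠ 0 := piB_eval_ne_zero hα n habsb
      have hpiAa : (piA α n).eval (α n) ≠ 0 :=
        piA_eval_ne_zero hα n (le_of_lt (hα n))
      have e1 : (pstar n (pB n)).eval b = Cst α n * cc * (pA n).eval b := by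
        rw [hP, Polynomial.eval_mul, Polynomial.eval_C]
      have e2 : conj' ((pA n).eval b) = (pstar n (pA n)).eval (α n) / (α n) ^ n := by
        rw [pstar_eval (hA.deg n) h0, mul_comm, mul_div_assoc, div_self hpow, mul_one]
      have e3 : conj' ((piB α n).eval b) = Cst α n * (piA α n).eval (α n) / (α n) ^ n := by
        have h4 := piB_conj_eval (α := α) n h0
        rw [← h4, mul_div_assoc, div_self hpow, mul_one]
      have hvB : conj' (sigProd α n * (pstar n (pB n)).eval b / (piB α n).eval b)
          = conj' cc * (sigProd α n * (pstar n (pA n)).eval (α n) / (piA α n).eval (α n)) := by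
        rw [e1, conj'_div, conj'_mul, conj'_mul, conj'_mul, e2, e3]
        field_simp
        linear_combination conj' cc * (pstar n (pA n)).eval (α n) *
          hreal
      have hposB : posR (conj' cc *
          (sigProd α n * (pstar n (pA n)).eval (α n) / (piA α n).eval (α n))) := by
        rw [← hvB]; exact posR_conj hnBn
      have hvA0 : posR (sigProd α n * (pstar n (pA n)).eval (α n) / (piA α n).eval (α n)) :=
        hnAn
      have : posR (conj' cc) := by
        have hq := posR_div hposB hvA0
        rwa [mul_div_assoc, div_self (posR_ne_zero hvA0), mul_one] at hq
      exact unit_posR_eq_one hcc this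

end ORF

open ORF MeasureTheory

/-- Lemma 5: with the stated normalization, for all n ≥ 0,
φ_n^α = (φ_n^β)_*, (φ_n^α)^*·B̌_n^β = φ_n^β·B̌_n^α and (φ_n^β)^*·B̌_n^α = φ_n^α·B̌_n^β
(as functions on the unit circle). -/
theorem stmt3 (α : ℕ → ℂ) (hα0 : α 0 = 0) (hα : ∀ j, ‖α j‖ < 1)
    (c : ℕ → Bool) (μ : Measure ℂ) (hμ : CircleMeasure μ)
    (φA φB : ℕ → ℂ → ℂ) (pA pB : ℕ → Polynomial ℂ)
    (hA : IsORF μ (piA α) φA pA) (hB : IsORF μ (piB α) φB pB)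
    (hnA : ∀ n, normA α pA n) (hnB : ∀ n, normB α pB n)
    (n : ℕ) :
    (∀ z, onT z → φA n z = substar (φB n) z) ∧
    (∀ z, onT z → starF α (piA α) pA n z * BcB α c n z = φB n z * BcA α c n z) ∧
    (∀ z, onT z → starF α (piB α) pB n z * BcA α c n z = φA n z * BcB α c n z) := by
  have hkey : pstar n (pB n) = Polynomial.C (Cst α n) * pA n :=
    key hα hμ hA hB hnA hnB n
  have hgoal1 : ∀ z, onT z → φA n z = conj' (φB n z) := by
    intro z hz
    rw [hB.rep n z, conj_ratB_eq hα n (pB n) (hB.deg n) hz, hA.rep n z,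
      Polynomial.eval_mul, Polynomial.eval_C, hkey, Polynomial.eval_mul, Polynomial.eval_C,
      ← mul_assoc, inv_mul_cancel₀ (Cst_ne_zero α n), one_mul]
  have hgoal1' : ∀ z, onT z → φB n z = conj' (φA n z) := by
    intro z hz
    rw [hgoal1 z hz, conj'_conj']
  refine ⟨?_, ?_, ?_⟩
  · intro z hz
    unfold substar
    rw [onT_conj_inv hz]
    exact hgoal1 z hz
  · intro z hz
    have hz0 := onT_ne_zero hz
    have hpiA := piA_eval_ne_zero hα n (onT_abs_le hz)
    have hcpiA : conj' ((piA α n).eval z) ≠ 0 := conj'_ne_zero hpiA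
    have e1 := BA_mul_piA hα n hz
    have e2 : (pstar n (pA n)).eval z = z ^ n * conj' ((pA n).eval z) :=
      pstar_eval_onT (hA.deg n) hz
    have e3 := BA_mul_BcB hα c n hz
    have hφB : φB n z = conj' ((pA n).eval z) / conj' ((piA α n).eval z) := by
      rw [hgoal1' z hz, hA.rep n z, conj'_div]
    have hBA : BA α n z = sigProd α n * z ^ n * conj' ((piA α n).eval z) /
        (piA α n).eval z := by
      rw [eq_div_iff hpiA]
      exact e1
    rw [← e3, hφB, hBA]
    unfold starF
    rw [e2]
    field_simp
  · intro z hz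
    have hz0 := onT_ne_zero hz
    have hpiB := piB_eval_ne_zero hα n (onT_abs_ge hz)
    have hcpiB : conj' ((piB α n).eval z) ≠ 0 := conj'_ne_zero hpiB
    have e1 := BB_mul_piB hα n hz
    have e2 : (pstar n (pB n)).eval z = z ^ n * conj' ((pB n).eval z) :=
      pstar_eval_onT (hB.deg n) hz
    have e3 := BB_mul_BcA hα c n hz
    have hφA : φA n z = conj' ((pB n).eval z) / conj' ((piB α n).eval z) := by
      rw [hgoal1 z hz, hB.rep n z, conj'_div]
    have hBB : BB α n z = sigProd α n * z ^ n * conj' ((piB α n).eval z) /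
        (piB α n).eval z := by
      rw [eq_div_iff hpiB]
      exact e1
    rw [← e3, hφA, hBB]
    unfold starF
    rw [e2]
    field_simp
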